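/- Let x : [t₀,∞) → ℝⁿ be twice differentiable. If the functions t ↦ t^{-3/2}·x''(t) and t ↦ t^{-1/2}·x'(t) both belong to L²([t₀,∞), ℝⁿ), then lim_{t→∞} (1/t)·x'(t) = 0. -/

import Mathlib

open MeasureTheory

open Filter
lemma aux_tendsto_zero (t₀ : ℝ) (F G : ℝ → ℝ)
    (hF0 : ∀ t, t₀ ≤ t → 0 ≤ F t)
    (hFG : ∀ s t, t₀ ≤ s → s ≤ t → F t ≤ F s + ∫ u in s..t, G u)
    (hFint : IntegrableOn F (Set.Ici t₀))
    (hGint : IntegrableOn G (Set.Ici t₀)) :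
    Tendsto F atTop (nhds 0) := by
  have hsub : ∀ a b : ℝ, t₀ ≤ a → t₀ ≤ b → Set.uIcc a b ⊆ Set.Ici t₀ := by
    intro a b ha hb u hu
    exact le_trans (le_inf ha hb) hu.1
  have hGII : ∀ a b : ℝ, t₀ ≤ a → t₀ ≤ b → IntervalIntegrable G volume a b := by
    intro a b ha hb
    exact (hGint.mono_set (hsub a b ha hb)).intervalIntegrable
  set φ : ℝ → ℝ := fun r => ∫ u in t₀..r, G u with hφ
  have hφt : Tendsto φ atTop (nhds (∫ u in Set.Ioi t₀, G u)) :=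
    intervalIntegral_tendsto_integral_Ioi t₀ (hGint.mono_set Set.Ioi_subset_Ici_self)
      tendsto_id
  rw [Metric.tendsto_atTop]
  intro ε hε
  rw [Metric.tendsto_atTop] at hφt
  obtain ⟨T₁, hT₁⟩ := hφt (ε / 4) (by linarith)
  set T : ℝ := max T₁ t₀ with hT
  -- find s ≥ T with F s < ε / 2
  have hs : ∃ s, T ≤ s ∧ F s < ε / 2 := by
    by_contra h
    push_neg at h
    have hconst : Integrable (fun _ : ℝ => ε / 2) (volume.restrict (Set.Ici T)) := by
      apply (hFint.mono_set (Set.Ici_subset_Ici.mpr (le_max_right T₁ t₀))).mono'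
        aestronglyMeasurable_const
      filter_upwards [ae_restrict_mem measurableSet_Ici] with u hu
      simp only [Real.norm_eq_abs, abs_of_pos (by linarith : (0:ℝ) < ε / 2)]
      exact h u hu
    rw [integrable_const_iff] at hconst
    rcases hconst with h' | h'
    · linarith
    · replace h' := h'.measure_univ_lt_top; rw [Measure.restrict_apply_univ] at h'
      simp [Real.volume_Ici] at h'
  obtain ⟨s, hTs, hFs⟩ := hs
  have hst₀ : t₀ ≤ s := le_trans (le_max_right T₁ t₀) hTs
  refine ⟨s, fun t ht => ?_⟩
  have htt₀ : t₀ ≤ t := le_trans hst₀ ht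
  have hint : (∫ u in s..t, G u) = φ t - φ s :=
    (intervalIntegral.integral_interval_sub_left (hGII t₀ t le_rfl htt₀)
      (hGII t₀ s le_rfl hst₀)).symm
  have h1 := hT₁ t (le_trans (le_trans (le_max_left T₁ t₀) hTs) ht)
  have h2 := hT₁ s (le_trans (le_max_left T₁ t₀) hTs)
  rw [Real.dist_eq] at h1 h2 ⊢
  have hFt := hFG s t hst₀ ht
  rw [hint] at hFt
  have := hF0 t htt₀
  rw [sub_zero, abs_of_nonneg this]
  rcases abs_lt.mp h1 with ⟨h1a, h1b⟩
  rcases abs_lt.mp h2 with ⟨h2a, h2b⟩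
  linarith

/-- If `t ↦ t^{-3/2} x''(t)` and `t ↦ t^{-1/2} x'(t)` are in `L²([t₀,∞))`, then
`(1/t) x'(t) → 0` as `t → ∞`. -/
theorem stmt_5 {n : ℕ} (t₀ : ℝ) (ht₀ : 0 < t₀)
    (x x' x'' : ℝ → EuclideanSpace ℝ (Fin n))
    (hx' : ∀ t, HasDerivAt x (x' t) t)
    (hx'' : ∀ t, HasDerivAt x' (x'' t) t)
    (hcont : Continuous x'')
    (h2 : IntegrableOn (fun t : ℝ => (1 / t ^ 3) * ‖x'' t‖ ^ 2) (Set.Ici t₀))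
    (h1 : IntegrableOn (fun t : ℝ => (1 / t) * ‖x' t‖ ^ 2) (Set.Ici t₀)) :
    Filter.Tendsto (fun t : ℝ => (1 / t) • x' t) Filter.atTop (nhds 0) := by
  have hcx' : Continuous x' := by
    rw [continuous_iff_continuousAt]; exact fun t => (hx'' t).continuousAt
  set F : ℝ → ℝ := fun t => (1 / t ^ 2) * ‖x' t‖ ^ 2 with hFdef
  set G : ℝ → ℝ := fun t => (1 / t ^ 3) * ‖x'' t‖ ^ 2 + (1 / t) * ‖x' t‖ ^ 2 with hGdef
  set D : ℝ → ℝ := fun t => (-2 / t ^ 3) * ‖x' t‖ ^ 2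
      + (1 / t ^ 2) * (2 * (inner ℝ (x'' t) (x' t) : ℝ)) with hDdef
  -- derivative of F
  have hD : ∀ u : ℝ, u ≠ 0 → HasDerivAt F (D u) u := by
    intro u hu
    have hg : HasDerivAt (fun t => ‖x' t‖ ^ 2) (2 * (inner ℝ (x'' u) (x' u) : ℝ)) u := by
      have := HasDerivAt.inner ℝ (hx'' u) (hx'' u)
      simp only [real_inner_self_eq_norm_sq] at this
      rw [real_inner_comm (x'' u) (x' u), ← two_mul] at this; exact this
    have hf : HasDerivAt (fun t : ℝ => 1 / t ^ 2) (-2 / u ^ 3) u := by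
      have h := (hasDerivAt_pow 2 u).inv (pow_ne_zero 2 hu)
      simp only [one_div]
      refine h.congr_deriv ?_
      field_simp
      ring
    exact hf.mul hg
  -- pointwise bound D ≤ G
  have hDG : ∀ u : ℝ, t₀ ≤ u → D u ≤ G u := by
    intro u hu
    have hu0 : 0 < u := lt_of_lt_of_le ht₀ hu
    have h3 : (0:ℝ) < u ^ 3 := pow_pos hu0 3
    rw [← mul_le_mul_iff_of_pos_right h3]
    have e1 : D u * u ^ 3 = -2 * ‖x' u‖ ^ 2 + 2 * u * (inner ℝ (x'' u) (x' u) : ℝ) := by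
      simp only [hDdef]; field_simp
    have e2 : G u * u ^ 3 = ‖x'' u‖ ^ 2 + u ^ 2 * ‖x' u‖ ^ 2 := by
      simp only [hGdef]; field_simp
    rw [e1, e2]
    nlinarith [real_inner_le_norm (x'' u) (x' u), sq_nonneg (‖x'' u‖ - u * ‖x' u‖),
      norm_nonneg (x' u), norm_nonneg (x'' u), sq_nonneg (‖x' u‖), hu0.le]
  -- continuity of D on positive reals
  have hDcont : ContinuousOn D (Set.Ici t₀) := by
    have hne : ∀ u ∈ Set.Ici t₀, u ≠ 0 := fun u hu => ne_of_gt (lt_of_lt_of_le ht₀ hu)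
    apply ContinuousOn.add
    · exact (continuousOn_const.div ((continuous_pow 3).continuousOn)
        (fun u hu => pow_ne_zero 3 (hne u hu))).mul (hcx'.norm.pow 2).continuousOn
    · exact (continuousOn_const.div ((continuous_pow 2).continuousOn)
        (fun u hu => pow_ne_zero 2 (hne u hu))).mul
        (continuous_const.mul (hcont.inner hcx')).continuousOn
  have hsub : ∀ a b : ℝ, t₀ ≤ a → t₀ ≤ b → Set.uIcc a b ⊆ Set.Ici t₀ := by
    intro a b ha hb u hu
    exact le_trans (le_inf ha hb) hu.1
  have hGint : IntegrableOn G (Set.Ici t₀) := h2.add h1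
  -- FTC estimate
  have hFG : ∀ s t, t₀ ≤ s → s ≤ t → F t ≤ F s + ∫ u in s..t, G u := by
    intro s t hs hst
    have ht : t₀ ≤ t := le_trans hs hst
    have hDint : IntervalIntegrable D volume s t :=
      (hDcont.mono (hsub s t hs ht)).intervalIntegrable
    have hGII : IntervalIntegrable G volume s t :=
      (hGint.mono_set (hsub s t hs ht)).intervalIntegrable
    have hftc : (∫ u in s..t, D u) = F t - F s := by
      apply intervalIntegral.integral_eq_sub_of_hasDerivAt _ hDint
      intro u hu
      rw [Set.uIcc_of_le hst] at hu
      exact hD u (ne_of_gt (lt_of_lt_of_le ht₀ (le_trans hs hu.1)))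
    have hmono : (∫ u in s..t, D u) ≤ ∫ u in s..t, G u := by
      apply intervalIntegral.integral_mono_on hst hDint hGII
      intro u hu
      exact hDG u (le_trans hs hu.1)
    linarith [hftc ▸ hmono]
  -- integrability of F
  have hFint : IntegrableOn F (Set.Ici t₀) := by
    apply Integrable.mono' (h1.const_mul t₀⁻¹)
    · apply ContinuousOn.aestronglyMeasurable _ measurableSet_Ici
      have hne : ∀ u ∈ Set.Ici t₀, u ≠ 0 := fun u hu => ne_of_gt (lt_of_lt_of_le ht₀ hu)
      exact (continuousOn_const.div ((continuous_pow 2).continuousOn)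
        (fun u hu => pow_ne_zero 2 (hne u hu))).mul (hcx'.norm.pow 2).continuousOn
    · filter_upwards [ae_restrict_mem measurableSet_Ici] with u hu
      have hu0 : 0 < u := lt_of_lt_of_le ht₀ hu
      have hb : (1:ℝ) / u ^ 2 ≤ t₀⁻¹ * (1 / u) := by
        have he : t₀⁻¹ * (1 / u) = 1 / (t₀ * u) := by field_simp
        rw [he, div_le_div_iff₀ (pow_pos hu0 2) (by positivity)]
        have hu' : t₀ ≤ u := hu
        nlinarith [hu', hu0]
      have hnn : (0:ℝ) ≤ ‖x' u‖ ^ 2 := sq_nonneg _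
      have : F u ≤ t₀⁻¹ * ((1 / u) * ‖x' u‖ ^ 2) := by
        simp only [hFdef]
        calc (1 / u ^ 2) * ‖x' u‖ ^ 2 ≤ (t₀⁻¹ * (1 / u)) * ‖x' u‖ ^ 2 :=
              mul_le_mul_of_nonneg_right hb hnn
          _ = t₀⁻¹ * ((1 / u) * ‖x' u‖ ^ 2) := by ring
      have hF0 : 0 ≤ F u := by
        simp only [hFdef]
        positivity
      rw [Real.norm_eq_abs, abs_of_nonneg hF0]
      exact this
  have hF0 : ∀ t, t₀ ≤ t → 0 ≤ F t := by
    intro t ht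
    have : 0 < t := lt_of_lt_of_le ht₀ ht
    simp only [hFdef]; positivity
  have hFtend : Tendsto F atTop (nhds 0) :=
    aux_tendsto_zero t₀ F G hF0 hFG hFint hGint
  -- conclude
  have hsq : Tendsto (fun t => Real.sqrt (F t)) atTop (nhds 0) := by
    have := (Real.continuous_sqrt.tendsto 0).comp hFtend
    rwa [Real.sqrt_zero] at this
  apply squeeze_zero_norm' _ hsq
  filter_upwards [eventually_ge_atTop t₀] with u hu
  have hu0 : 0 < u := lt_of_lt_of_le ht₀ hu
  have : F u = ((1 / u) * ‖x' u‖) ^ 2 := by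
    simp only [hFdef]; field_simp
  rw [norm_smul, this, Real.sqrt_sq (by positivity), Real.norm_eq_abs,
    abs_of_pos (by positivity : (0:ℝ) < 1 / u)]
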